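/- For every finite alphabet Σ, the function reverse : Σ* → Σ* that maps each word to its mirror image is computed by a planar reversible two-way finite transducer with 3 states. -/
import Mathlib


namespace Planar2DFT

/-- Tape alphabet: input letters plus the two endmarkers `▷` and `◁`. -/
inductive Tape (A : Type) where
  | lend : Tape A
  | rend : Tape A
  | sym  : A → Tape A

/-- Edges of the transition profile `G(ρ, f)` on vertices `Q × Bool`
(`true` codes direction `+1`, `false` codes `-1`): an edge
`(q, -ρ q) → (r, ρ r)` for every `(q, r) ∈ f`. -/
def ProfileEdge {Q : Type} (ρ : Q → Bool) (f : Set (Q × Q)) :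
    Q × Bool → Q × Bool → Prop :=
  fun u v => ∃ p ∈ f, u = (p.1, !ρ p.1) ∧ v = (p.2, ρ p.2)

/-- The extension of a strict order on `Q` to `Q × Bool`:
`(q,i) < (r,j)` iff (`i = -1` and `j = 1`), or (`q < r` and `i = j = 1`),
or (`q > r` and `i = j = -1`). -/
def ExtLt {Q : Type} (lt : Q → Q → Prop) : Q × Bool → Q × Bool → Prop :=
  fun x y =>
    (x.2 = false ∧ y.2 = true) ∨
    (lt x.1 y.1 ∧ x.2 = true ∧ y.2 = true) ∨
    (lt y.1 x.1 ∧ x.2 = false ∧ y.2 = false)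

/-- Planarity of a transition w.r.t. a direction map `ρ` and a strict total
order `lt`: no vertices `u < r < v < s` with an edge between `u` and `v`
(in either direction) and an edge between `r` and `s` (in either direction). -/
def IsPlanar {Q : Type} (ρ : Q → Bool) (lt : Q → Q → Prop) (f : Set (Q × Q)) : Prop :=
  ¬ ∃ u r v s : Q × Bool, ExtLt lt u r ∧ ExtLt lt r v ∧ ExtLt lt v s ∧
      (ProfileEdge ρ f u v ∨ ProfileEdge ρ f v u) ∧
      (ProfileEdge ρ f r s ∨ ProfileEdge ρ f s r)

/-- Deterministic transition: a partial function. -/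
def IsDet {Q : Type} (f : Set (Q × Q)) : Prop :=
  ∀ q r r', (q, r) ∈ f → (q, r') ∈ f → r = r'

/-- Reversible transition: a partial injection. -/
def IsRev {Q : Type} (f : Set (Q × Q)) : Prop :=
  IsDet f ∧ ∀ q q' r, (q, r) ∈ f → (q', r) ∈ f → q = q'

/-- Edges of the glued graph `C(ρ, f, g)` on `Q × Fin 3`, levels `0, 1, 2`
coding `-1, 0, 1`: the copy of `G(ρ,f)` lives on levels `{0,1}` (side `+1`
corresponding to level `1`) and the copy of `G(ρ,g)` on levels `{1,2}`
(side `+1` corresponding to level `2`). -/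
def GlueEdge {Q : Type} (ρ : Q → Bool) (f g : Set (Q × Q)) :
    Q × Fin 3 → Q × Fin 3 → Prop :=
  fun x y =>
    (x.2 ≠ 2 ∧ y.2 ≠ 2 ∧
      ProfileEdge ρ f (x.1, decide (x.2 = 1)) (y.1, decide (y.2 = 1))) ∨
    (x.2 ≠ 0 ∧ y.2 ≠ 0 ∧
      ProfileEdge ρ g (x.1, decide (x.2 = 2)) (y.1, decide (y.2 = 2)))

/-- Gluing composition `f * g` of transitions: `(q, r) ∈ f * g` iff there is a
directed path from `(q, -ρ q)` to `(r, ρ r)` in the glued graph `C(ρ, f, g)`. -/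
def glue {Q : Type} (ρ : Q → Bool) (f g : Set (Q × Q)) : Set (Q × Q) :=
  {p | Relation.ReflTransGen (GlueEdge ρ f g)
        (p.1, if ρ p.1 then (0 : Fin 3) else 2)
        (p.2, if ρ p.2 then (2 : Fin 3) else 0)}

/-- The identity transition, unit of the gluing composition. -/
def idRel (Q : Type) : Set (Q × Q) := {p | p.1 = p.2}

/-- Iterated gluing powers of a transition, with `glpow ρ f 0 = idRel Q`. -/
def glpow {Q : Type} (ρ : Q → Bool) (f : Set (Q × Q)) : ℕ → Set (Q × Q)
  | 0 => idRel Q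
  | n + 1 => glue ρ (glpow ρ f n) f

/-- A configuration of a two-way machine: the tape content to the left of the
head, the current state, and the tape content to the right of the head. -/
abbrev Config (Q A : Type) := List (Tape A) × Q × List (Tape A)

/-- The tape encoding `▷ u ◁` of an input word `u`. -/
def tapeOf {A : Type} (u : List A) : List (Tape A) :=
  Tape.lend :: (u.map Tape.sym ++ [Tape.rend])

/-- A two-way (nondeterministic) finite transducer. -/
structure TwoWayTransducer (Q A B : Type) where
  ρ : Q → Bool
  init : Q
  init_fwd : ρ init = true
  final : Set Q
  δ : Tape A → Set (Q × List B × Q)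

namespace TwoWayTransducer

variable {Q A B : Type}

/-- The transitions `⌊δ⌋(a)` of the underlying automaton. -/
def rel (T : TwoWayTransducer Q A B) (a : Tape A) : Set (Q × Q) :=
  {p | ∃ w, (p.1, w, p.2) ∈ T.δ a}

def Deterministic (T : TwoWayTransducer Q A B) : Prop :=
  ∀ a, IsDet (T.rel a)

def Reversible (T : TwoWayTransducer Q A B) : Prop :=
  ∀ a, IsRev (T.rel a)

def Planar (T : TwoWayTransducer Q A B) : Prop :=
  ∃ lt : Q → Q → Prop, IsStrictTotalOrder Q lt ∧
    ∀ a : A, IsPlanar T.ρ lt (T.rel (Tape.sym a))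

/-- One step of the two-way transducer, labelled by the output word. -/
def Step (T : TwoWayTransducer Q A B) (c : Config Q A) (w : List B)
    (c' : Config Q A) : Prop :=
  ∃ a u v q r, (q, w, r) ∈ T.δ a ∧
    ((T.ρ q = true ∧ T.ρ r = true ∧ c = (u, q, a :: v) ∧ c' = (u ++ [a], r, v)) ∨
     (T.ρ q = true ∧ T.ρ r = false ∧ c = (u, q, a :: v) ∧ c' = (u, r, a :: v)) ∨
     (T.ρ q = false ∧ T.ρ r = false ∧ c = (u ++ [a], q, v) ∧ c' = (u, r, a :: v)) ∨
     (T.ρ q = false ∧ T.ρ r = true ∧ c = (u ++ [a], q, v) ∧ c' = (u ++ [a], r, v)))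

/-- Multi-step runs, accumulating the concatenated output. -/
inductive Run (T : TwoWayTransducer Q A B) : Config Q A → List B → Config Q A → Prop
  | refl (c : Config Q A) : Run T c [] c
  | step {c₁ w₁ c₂ w₂ c₃} : Run T c₁ w₁ c₂ → T.Step c₂ w₂ c₃ → Run T c₁ (w₁ ++ w₂) c₃

/-- The pair `(u, v)` is realized by `T`. -/
def Realizes (T : TwoWayTransducer Q A B) (u : List A) (v : List B) : Prop :=
  ∃ qf ∈ T.final, T.Run ([], T.init, tapeOf u) v (tapeOf u, qf, [])

/-- `T` computes the partial function `f`. -/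
def Computes (T : TwoWayTransducer Q A B) (f : List A → Option (List B)) : Prop :=
  ∀ u v, f u = some v ↔ T.Realizes u v

end TwoWayTransducer

/-- Membership in the least submonoid of `B(Q,ρ)` containing the transitions
`⌊δ⌋(a)` for the input letters `a`. -/
inductive InBehav {Q A B : Type} (T : TwoWayTransducer Q A B) : Set (Q × Q) → Prop
  | one : InBehav T (idRel Q)
  | gen (a : A) : InBehav T (T.rel (Tape.sym a))
  | mul {f g} : InBehav T f → InBehav T g → InBehav T (glue T.ρ f g)

/-- The behaviour monoid `B(T)` is aperiodic. -/
def ApBehav {Q A B : Type} (T : TwoWayTransducer Q A B) : Prop :=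
  ∃ n : ℕ, ∀ f, InBehav T f → glpow T.ρ f (n + 1) = glpow T.ρ f n

/-- A first-order transduction: a partial function computed by some
deterministic two-way transducer whose behaviour monoid is aperiodic. -/
def IsFOTransduction {A B : Type} (f : List A → Option (List B)) : Prop :=
  ∃ (n : ℕ) (T : TwoWayTransducer (Fin n) A B),
    T.Deterministic ∧ ApBehav T ∧ T.Computes f

/-- A two-way (nondeterministic) finite automaton. -/
structure TwoWayAutomaton (Q A : Type) where
  ρ : Q → Bool
  init : Q
  init_fwd : ρ init = true
  final : Set Q
  δ : Tape A → Set (Q × Q)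

namespace TwoWayAutomaton

variable {Q A : Type}

def Deterministic (M : TwoWayAutomaton Q A) : Prop := ∀ a, IsDet (M.δ a)

def Reversible (M : TwoWayAutomaton Q A) : Prop := ∀ a, IsRev (M.δ a)

def Planar (M : TwoWayAutomaton Q A) : Prop :=
  ∃ lt : Q → Q → Prop, IsStrictTotalOrder Q lt ∧
    ∀ a : A, IsPlanar M.ρ lt (M.δ (Tape.sym a))

/-- One step of the two-way automaton. -/
def Step (M : TwoWayAutomaton Q A) (c c' : Config Q A) : Prop :=
  ∃ a u v q r, (q, r) ∈ M.δ a ∧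
    ((M.ρ q = true ∧ M.ρ r = true ∧ c = (u, q, a :: v) ∧ c' = (u ++ [a], r, v)) ∨
     (M.ρ q = true ∧ M.ρ r = false ∧ c = (u, q, a :: v) ∧ c' = (u, r, a :: v)) ∨
     (M.ρ q = false ∧ M.ρ r = false ∧ c = (u ++ [a], q, v) ∧ c' = (u, r, a :: v)) ∨
     (M.ρ q = false ∧ M.ρ r = true ∧ c = (u ++ [a], q, v) ∧ c' = (u ++ [a], r, v)))

def Accepts (M : TwoWayAutomaton Q A) (u : List A) : Prop :=
  ∃ qf ∈ M.final, Relation.ReflTransGen M.Step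
    ([], M.init, tapeOf u) (tapeOf u, qf, [])

def Language (M : TwoWayAutomaton Q A) : Set (List A) := {u | M.Accepts u}

end TwoWayAutomaton

/-- The underlying automaton `⌊T⌋` of a transducer `T`. -/
def forget {Q A B : Type} (T : TwoWayTransducer Q A B) : TwoWayAutomaton Q A :=
  { ρ := T.ρ, init := T.init, init_fwd := T.init_fwd, final := T.final,
    δ := fun a => T.rel a }

/-- Star-free languages: the smallest class containing all finite languages
and closed under finite union, complement and concatenation. -/
inductive StarFree {A : Type} : Set (List A) → Prop
  | of_finite (L : Set (List A)) : L.Finite → StarFree L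
  | union {L M : Set (List A)} : StarFree L → StarFree M → StarFree (L ∪ M)
  | compl {L : Set (List A)} : StarFree L → StarFree Lᶜ
  | concat {L M : Set (List A)} : StarFree L → StarFree M →
      StarFree {w | ∃ u ∈ L, ∃ v ∈ M, w = u ++ v}

/-- A (total, deterministic) sequential transducer. -/
structure SeqTransducer (Q A B : Type) where
  init : Q
  next : A → Q → Q
  out : A → Q → List B
  fin : Q → List B

namespace SeqTransducer

variable {Q A B : Type}

/-- Running a sequential transducer on a word from a state: final state and
produced output. -/
def run (T : SeqTransducer Q A B) : List A → Q → Q × List B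
  | [], q => (q, [])
  | a :: w, q =>
      let p := run T w (T.next a q)
      (p.1, T.out a q ++ p.2)

/-- The (total) sequential function computed by a sequential transducer. -/
def fn (T : SeqTransducer Q A B) (w : List A) : List B :=
  (T.run w T.init).2 ++ T.fin (T.run w T.init).1

end SeqTransducer

/-- Membership in the transition monoid of a sequential transducer, i.e. the
monoid of functions `Q → Q` generated by the `∂₁(a)`. -/
inductive SeqGen {Q A B : Type} (T : SeqTransducer Q A B) : (Q → Q) → Prop
  | id : SeqGen T id
  | gen (a : A) : SeqGen T (T.next a)
  | comp {h h'} : SeqGen T h → SeqGen T h' → SeqGen T (h ∘ h')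

/-- A sequential transducer is aperiodic when its transition monoid is. -/
def SeqTransducer.Aperiodic {Q A B : Type} (T : SeqTransducer Q A B) : Prop :=
  ∃ n : ℕ, ∀ h, SeqGen T h → h^[n + 1] = h^[n]



section ReverseConstruction

variable {A : Type}

/-- Direction map: states 0 and 2 go forward, state 1 goes backward. -/
def rho : Fin 3 → Bool := fun q => !(decide (q = 1))

/-- Transition function of the reversing transducer. -/
def Tdel (A : Type) : Tape A → Set (Fin 3 × List A × Fin 3)
  | Tape.lend => {t | t = (0, [], 0) ∨ t = (1, [], 2)}
  | Tape.rend => {t | t = (0, [], 1) ∨ t = (2, [], 2)}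
  | Tape.sym a => {t | t = (0, [], 0) ∨ t = (1, [a], 1) ∨ t = (2, [], 2)}

/-- The reversing transducer. -/
def revT (A : Type) : TwoWayTransducer (Fin 3) A A where
  ρ := rho
  init := 0
  init_fwd := by decide
  final := {2}
  δ := Tdel A

lemma rho0 : rho 0 = true := rfl
lemma rho1 : rho 1 = false := rfl
lemma rho2 : rho 2 = true := rfl

lemma rel_sym (a : A) :
    (revT A).rel (Tape.sym a) = {p | p = (0, 0) ∨ p = (1, 1) ∨ p = (2, 2)} := by
  ext ⟨q, r⟩
  simp only [TwoWayTransducer.rel, revT, Tdel, Set.mem_setOf_eq, Prod.mk.injEq]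
  constructor
  · rintro ⟨w, h | h | h⟩ <;> simp_all
  · rintro (⟨h1, h2⟩ | ⟨h1, h2⟩ | ⟨h1, h2⟩)
    · exact ⟨[], Or.inl (by simp [h1, h2])⟩
    · exact ⟨[a], Or.inr (Or.inl (by simp [h1, h2]))⟩
    · exact ⟨[], Or.inr (Or.inr (by simp [h1, h2]))⟩

lemma revT_reversible : (revT A).Reversible := by
  intro a
  constructor
  · intro q r r' h h'
    obtain ⟨w, hw⟩ := h; obtain ⟨w', hw'⟩ := h'
    cases a <;>
      simp only [revT, Tdel, Set.mem_setOf_eq, Prod.mk.injEq] at hw hw' <;>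
      rcases hw with ⟨rfl, -, rfl⟩ | ⟨rfl, -, rfl⟩ | ⟨rfl, -, rfl⟩ <;>
      rcases hw' with ⟨h1, -, rfl⟩ | ⟨h1, -, rfl⟩ | ⟨h1, -, rfl⟩ <;>
      simp_all
  · intro q q' r h h'
    obtain ⟨w, hw⟩ := h; obtain ⟨w', hw'⟩ := h'
    cases a <;>
      simp only [revT, Tdel, Set.mem_setOf_eq, Prod.mk.injEq] at hw hw' <;>
      rcases hw with ⟨rfl, -, rfl⟩ | ⟨rfl, -, rfl⟩ | ⟨rfl, -, rfl⟩ <;>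
      rcases hw' with ⟨rfl, -, h1⟩ | ⟨rfl, -, h1⟩ | ⟨rfl, -, h1⟩ <;>
      simp_all

set_option synthInstance.maxSize 2000 in
set_option maxHeartbeats 1000000 in
lemma revT_planar : (revT A).Planar := by
  refine ⟨(· < ·), inferInstance, fun a => ?_⟩
  rw [rel_sym]
  show IsPlanar rho (· < ·) _
  simp only [IsPlanar, ExtLt, ProfileEdge, Set.mem_setOf_eq]
  decide

/-- Concatenation of runs. -/
lemma run_trans {Q A B : Type} {T : TwoWayTransducer Q A B} {c c' c'' w w'}
    (h : T.Run c w c') (h' : T.Run c' w' c'') : T.Run c (w ++ w') c'' := by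
  induction h' with
  | refl => simpa using h
  | step h1 h2 ih => rw [← List.append_assoc]; exact ih.step h2

lemma run_single {Q A B : Type} {T : TwoWayTransducer Q A B} {c w c'}
    (h : T.Step c w c') : T.Run c w c' := by
  have := (TwoWayTransducer.Run.refl (T := T) c).step h
  simpa using this

/-- First-step decomposition of a run. -/
lemma run_cases {Q A B : Type} {T : TwoWayTransducer Q A B} {c w d}
    (h : T.Run c w d) :
    (c = d ∧ w = []) ∨ ∃ w₁ c₁ w₂, T.Step c w₁ c₁ ∧ T.Run c₁ w₂ d ∧ w = w₁ ++ w₂ := by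
  induction h with
  | refl => exact Or.inl ⟨rfl, rfl⟩
  | @step w₁ c₂ w₂ c₃ h1 h2 ih =>
    rcases ih with ⟨rfl, rfl⟩ | ⟨wa, ca, wb, hs, hr, rfl⟩
    · exact Or.inr ⟨w₂, c₃, [], h2, TwoWayTransducer.Run.refl c₃, by simp⟩
    · exact Or.inr ⟨wa, ca, wb ++ w₂, hs, hr.step h2, by simp⟩

/-- Deterministic step function of `revT`. -/
def stepF (c : Config (Fin 3) A) : Option (List A × Config (Fin 3) A) :=
  match c with
  | (l, q, r) =>
    if q = 1 then
      match l.getLast? with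
      | some (Tape.sym a) => some ([a], (l.dropLast, 1, Tape.sym a :: r))
      | some Tape.lend => some ([], (l, 2, r))
      | _ => none
    else
      match r with
      | Tape.lend :: v => if q = 0 then some ([], (l ++ [Tape.lend], 0, v)) else none
      | Tape.rend :: v =>
          if q = 0 then some ([], (l, 1, Tape.rend :: v))
          else some ([], (l ++ [Tape.rend], 2, v))
      | Tape.sym a :: v => some ([], (l ++ [Tape.sym a], q, v))
      | [] => none

lemma step_eq_stepF {c : Config (Fin 3) A} {w c'}
    (h : (revT A).Step c w c') : stepF c = some (w, c') := by
  obtain ⟨a, u, v, q, r, hm, hc⟩ := h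
  simp only [revT] at hm hc
  rcases hc with ⟨hq, hr, rfl, rfl⟩ | ⟨hq, hr, rfl, rfl⟩ | ⟨hq, hr, rfl, rfl⟩ | ⟨hq, hr, rfl, rfl⟩ <;>
    cases a <;>
    simp only [Tdel, Set.mem_setOf_eq, Prod.mk.injEq] at hm <;>
    rcases hm with ⟨rfl, rfl, rfl⟩ | ⟨rfl, rfl, rfl⟩ <;>
    simp_all [stepF, rho0, rho1, rho2, List.getLast?_concat, List.dropLast_concat]

lemma revT_step_det {c : Config (Fin 3) A} {w w' c₁ c₂}
    (h : (revT A).Step c w c₁) (h' : (revT A).Step c w' c₂) :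
    w = w' ∧ c₁ = c₂ := by
  have h1 := step_eq_stepF h
  have h2 := step_eq_stepF h'
  rw [h1] at h2
  exact Prod.mk.injEq .. ▸ (Option.some.inj h2)

lemma revT_terminal {l : List (Tape A)} {w c'} :
    ¬ (revT A).Step (l, 2, []) w c' := by
  intro h
  have := step_eq_stepF h
  simp [stepF] at this

/-- Any run from a configuration to a terminal configuration extends any
other run from that configuration. -/
lemma run_prefix {c₀ : Config (Fin 3) A} {w cf}
    (hterm : ∀ w' c', ¬ (revT A).Step cf w' c')
    (h : (revT A).Run c₀ w cf) :
    ∀ {w' c'}, (revT A).Run c₀ w' c' →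
      ∃ w'', (revT A).Run c' w'' cf ∧ w = w' ++ w'' := by
  intro w' c' h'
  induction h' with
  | refl => exact ⟨w, h, rfl⟩
  | @step w₁ d₂ w₂ d₃ hr hs ih =>
    obtain ⟨w'', hw'', rfl⟩ := ih
    rcases run_cases hw'' with ⟨rfl, rfl⟩ | ⟨wa, ca, wb, hsa, hra, rfl⟩
    · exact absurd hs (hterm _ _)
    · obtain ⟨rfl, rfl⟩ := revT_step_det hsa hs
      exact ⟨wb, hra, by simp⟩

/-- Forward sweep in state 0. -/
lemma runA (v : List A) : ∀ l r,
    (revT A).Run (l, 0, v.map Tape.sym ++ r) [] (l ++ v.map Tape.sym, 0, r) := by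
  induction v with
  | nil => intro l r; simpa using TwoWayTransducer.Run.refl (T := revT A) (l, 0, r)
  | cons a v ih =>
    intro l r
    have hs : (revT A).Step (l, 0, Tape.sym a :: (v.map Tape.sym ++ r)) []
        (l ++ [Tape.sym a], 0, v.map Tape.sym ++ r) :=
      ⟨Tape.sym a, l, v.map Tape.sym ++ r, 0, 0, Or.inl rfl,
        Or.inl ⟨rfl, rfl, rfl, rfl⟩⟩
    have := run_trans (run_single hs) (ih (l ++ [Tape.sym a]) r)
    simpa using this

/-- Forward sweep in state 2. -/
lemma runC (v : List A) : ∀ l r,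
    (revT A).Run (l, 2, v.map Tape.sym ++ r) [] (l ++ v.map Tape.sym, 2, r) := by
  induction v with
  | nil => intro l r; simpa using TwoWayTransducer.Run.refl (T := revT A) (l, 2, r)
  | cons a v ih =>
    intro l r
    have hs : (revT A).Step (l, 2, Tape.sym a :: (v.map Tape.sym ++ r)) []
        (l ++ [Tape.sym a], 2, v.map Tape.sym ++ r) :=
      ⟨Tape.sym a, l, v.map Tape.sym ++ r, 2, 2, Or.inr (Or.inr rfl),
        Or.inl ⟨rfl, rfl, rfl, rfl⟩⟩
    have := run_trans (run_single hs) (ih (l ++ [Tape.sym a]) r)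
    simpa using this

/-- Backward sweep in state 1, outputting the word reversed. -/
lemma runB (v : List A) : ∀ l r,
    (revT A).Run (l ++ v.map Tape.sym, 1, r) v.reverse (l, 1, v.map Tape.sym ++ r) := by
  induction v with
  | nil => intro l r; simpa using TwoWayTransducer.Run.refl (T := revT A) (l, 1, r)
  | cons a v ih =>
    intro l r
    have h1 := ih (l ++ [Tape.sym a]) r
    have hs : (revT A).Step (l ++ [Tape.sym a], 1, v.map Tape.sym ++ r) [a]
        (l, 1, Tape.sym a :: (v.map Tape.sym ++ r)) :=
      ⟨Tape.sym a, l, v.map Tape.sym ++ r, 1, 1, Or.inr (Or.inl rfl),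
        Or.inr (Or.inr (Or.inl ⟨rfl, rfl, rfl, rfl⟩))⟩
    have h2 := run_trans h1 (run_single hs)
    have e1 : l ++ (a :: v).map Tape.sym = (l ++ [Tape.sym a]) ++ v.map Tape.sym := by
      simp
    rw [e1]
    simpa using h2

/-- The canonical accepting run of `revT` on input `u`. -/
lemma revT_canonical (u : List A) :
    (revT A).Run ([], 0, tapeOf u) u.reverse (tapeOf u, 2, []) := by
  have s1 : (revT A).Step ([], 0, tapeOf u) []
      ([Tape.lend], 0, u.map Tape.sym ++ [Tape.rend]) :=
    ⟨Tape.lend, [], u.map Tape.sym ++ [Tape.rend], 0, 0, Or.inl rfl,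
      Or.inl ⟨rfl, rfl, rfl, by simp⟩⟩
  have r1 := runA (A := A) u [Tape.lend] [Tape.rend]
  have s2 : (revT A).Step ([Tape.lend] ++ u.map Tape.sym, 0, [Tape.rend]) []
      ([Tape.lend] ++ u.map Tape.sym, 1, [Tape.rend]) :=
    ⟨Tape.rend, [Tape.lend] ++ u.map Tape.sym, [], 0, 1, Or.inl rfl,
      Or.inr (Or.inl ⟨rfl, rfl, rfl, rfl⟩)⟩
  have r2 := runB (A := A) u [Tape.lend] [Tape.rend]
  have s3 : (revT A).Step ([Tape.lend], 1, u.map Tape.sym ++ [Tape.rend]) []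
      ([Tape.lend], 2, u.map Tape.sym ++ [Tape.rend]) :=
    ⟨Tape.lend, [], u.map Tape.sym ++ [Tape.rend], 1, 2, Or.inr rfl,
      Or.inr (Or.inr (Or.inr ⟨rfl, rfl, by simp, by simp⟩))⟩
  have r3 := runC (A := A) u [Tape.lend] [Tape.rend]
  have s4 : (revT A).Step ([Tape.lend] ++ u.map Tape.sym, 2, [Tape.rend]) []
      (([Tape.lend] ++ u.map Tape.sym) ++ [Tape.rend], 2, []) :=
    ⟨Tape.rend, [Tape.lend] ++ u.map Tape.sym, [], 2, 2, Or.inr rfl,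
      Or.inl ⟨rfl, rfl, rfl, rfl⟩⟩
  have htot := run_trans (run_single s1) (run_trans r1 (run_trans (run_single s2)
    (run_trans r2 (run_trans (run_single s3) (run_trans r3 (run_single s4))))))
  have e : tapeOf u = ([Tape.lend] ++ u.map Tape.sym) ++ [Tape.rend] := by
    simp [tapeOf]
  rw [e]
  simpa [tapeOf] using htot

lemma revT_computes : (revT A).Computes (fun w => some w.reverse) := by
  intro u v
  constructor
  · intro h
    simp only [Option.some.injEq] at h
    subst h
    exact ⟨2, rfl, revT_canonical u⟩
  · rintro ⟨qf, hqf, hrun⟩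
    have hqf2 : qf = 2 := hqf
    subst hqf2
    have hterm : ∀ w' c', ¬ (revT A).Step (tapeOf u, 2, []) w' c' :=
      fun w' c' => revT_terminal
    obtain ⟨w'', hw'', he⟩ := run_prefix hterm (revT_canonical u) hrun
    rcases run_cases hw'' with ⟨-, rfl⟩ | ⟨wa, ca, wb, hsa, -, -⟩
    · simp at he; simp [he]
    · exact absurd hsa (hterm _ _)

end ReverseConstruction

/-- for every finite alphabet, the mirror-image function is
computed by a planar reversible two-way finite transducer with 3 states. -/
theorem reverse_planar_reversible {A : Type} [Fintype A] :
    ∃ T : TwoWayTransducer (Fin 3) A A,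
      T.Planar ∧ T.Reversible ∧ T.Computes (fun w => some w.reverse) := by
  exact ⟨revT A, revT_planar, revT_reversible, revT_computes⟩
end Planar2DFT
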